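/- Let P ∈ ℝ^{d×d} be a symmetric matrix such that P ≠ a⊙b for all a, b ∈ ℝ^d. Then there exists a constant C > 0 such that for all a ∈ ℂ^d and all ξ ∈ ℝ^d, ‖a⊙ξ‖ ≤ C ‖𝐏(a⊙ξ)‖, where 𝐏(M) := M − (⟨M, P⟩/‖P‖²) P is the (complexified) orthogonal projection of M ∈ ℂ^{d×d} onto the orthogonal complement of the complex span of P with respect to the Frobenius inner product ⟨M, N⟩ = Σ_{ij} M_{ij} conj(N_{ij}), and ‖·‖ is the Frobenius norm. -/

import Mathlib

/-- The symmetric tensor product `a ⊙ b := (a ⊗ b + b ⊗ a)/2` of real vectors. -/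
noncomputable def symTensor {d : ℕ} (a b : Fin d → ℝ) : Matrix (Fin d) (Fin d) ℝ :=
  fun i j => (a i * b j + b i * a j) / 2

/-- The symmetric tensor product `a ⊙ ξ ∈ ℂ^{d×d}` of `a ∈ ℂ^d` and `ξ ∈ ℝ^d`. -/
noncomputable def symTensorC {d : ℕ} (a : Fin d → ℂ) (ξ : Fin d → ℝ) :
    Matrix (Fin d) (Fin d) ℂ :=
  fun i j => (a i * (ξ j : ℂ) + (ξ i : ℂ) * a j) / 2

/-- The Frobenius norm of a complex matrix. -/
noncomputable def frobC {d : ℕ} (M : Matrix (Fin d) (Fin d) ℂ) : ℝ :=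
  Real.sqrt (∑ i, ∑ j, ‖M i j‖ ^ 2)

/-- The (complexified) orthogonal projection of `ℂ^{d×d}` onto the orthogonal complement of
the complex span of the real matrix `P` w.r.t. the Frobenius inner product
`⟨M, N⟩ = Σ_{ij} M_{ij} conj(N_{ij})` (note `conj (P i j) = P i j` as `P` is real). -/
noncomputable def projPerp {d : ℕ} (P : Matrix (Fin d) (Fin d) ℝ)
    (M : Matrix (Fin d) (Fin d) ℂ) : Matrix (Fin d) (Fin d) ℂ :=
  M - ((∑ i, ∑ j, M i j * ((P i j : ℝ) : ℂ)) / (((∑ i, ∑ j, (P i j) ^ 2 : ℝ) : ℂ))) •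
        P.map (fun t => (t : ℂ))

section AuxEllipticity

variable {d : ℕ}

lemma frobC_nonneg (M : Matrix (Fin d) (Fin d) ℂ) : 0 ≤ frobC M :=
  Real.sqrt_nonneg _

lemma frobC_eq_zero_iff {M : Matrix (Fin d) (Fin d) ℂ} : frobC M = 0 ↔ M = 0 := by
  constructor
  · intro h
    have h0 : ∑ i, ∑ j, ‖M i j‖ ^ 2 = 0 := by
      have hle := Real.sqrt_eq_zero'.mp h
      have hge : (0:ℝ) ≤ ∑ i, ∑ j, ‖M i j‖ ^ 2 :=
        Finset.sum_nonneg fun i _ => Finset.sum_nonneg fun j _ => sq_nonneg _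
      linarith
    ext i j
    have hi := (Finset.sum_eq_zero_iff_of_nonneg
      (fun i _ => Finset.sum_nonneg fun j _ => sq_nonneg (‖M i j‖))).mp h0 i
      (Finset.mem_univ i)
    have hj := (Finset.sum_eq_zero_iff_of_nonneg
      (fun j _ => sq_nonneg (‖M i j‖))).mp hi j (Finset.mem_univ j)
    have habs : ‖M i j‖ = 0 := by
      nlinarith [norm_nonneg (M i j)]
    simpa using habs
  · rintro rfl
    simp [frobC]

lemma frobC_smul (z : ℂ) (M : Matrix (Fin d) (Fin d) ℂ) :
    frobC (z • M) = ‖z‖ * frobC M := by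
  unfold frobC
  have h : ∀ i j : Fin d, ‖(z • M) i j‖ ^ 2
      = ‖z‖ ^ 2 * ‖M i j‖ ^ 2 := by
    intro i j
    simp [Matrix.smul_apply, map_mul, mul_pow]
  simp_rw [h, ← Finset.mul_sum]
  rw [Real.sqrt_mul (by positivity), Real.sqrt_sq (norm_nonneg _)]

lemma symTensorC_smul_left (z : ℂ) (a : Fin d → ℂ) (ξ : Fin d → ℝ) :
    symTensorC (z • a) ξ = z • symTensorC a ξ := by
  ext i j
  simp only [symTensorC, Matrix.smul_apply, Pi.smul_apply, smul_eq_mul]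
  ring

lemma symTensorC_smul_right (r : ℝ) (a : Fin d → ℂ) (ξ : Fin d → ℝ) :
    symTensorC a (r • ξ) = ((r : ℂ)) • symTensorC a ξ := by
  ext i j
  simp only [symTensorC, Matrix.smul_apply, Pi.smul_apply, smul_eq_mul]
  push_cast
  ring

lemma projPerp_smul (P : Matrix (Fin d) (Fin d) ℝ) (z : ℂ) (M : Matrix (Fin d) (Fin d) ℂ) :
    projPerp P (z • M) = z • projPerp P M := by
  unfold projPerp
  ext i j
  simp only [Matrix.sub_apply, Matrix.smul_apply, Matrix.map_apply, smul_eq_mul]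
  have hS : (∑ i, ∑ j, z * M i j * ((P i j : ℝ) : ℂ))
      = z * ∑ i, ∑ j, M i j * ((P i j : ℝ) : ℂ) := by
    simp [Finset.mul_sum, mul_assoc]
  rw [hS, mul_div_assoc]
  ring

lemma symTensorC_eq_zero {a : Fin d → ℂ} {ξ : Fin d → ℝ}
    (h : symTensorC a ξ = 0) : a = 0 ∨ ξ = 0 := by
  by_cases hξ : ξ = 0
  · right; exact hξ
  left
  obtain ⟨k, hk⟩ : ∃ k, ξ k ≠ 0 := by
    by_contra hc; push_neg at hc; exact hξ (funext hc)
  have hentry : ∀ i j : Fin d, a i * (ξ j : ℂ) + (ξ i : ℂ) * a j = 0 := by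
    intro i j
    have h' : (a i * (ξ j : ℂ) + (ξ i : ℂ) * a j) / 2 = 0 := congrFun (congrFun h i) j
    linear_combination (2:ℂ) * h'
  have hξkC : ((ξ k : ℂ)) ≠ 0 := by exact_mod_cast hk
  have hak : a k = 0 := by
    have h2 : a k * (ξ k : ℂ) = 0 := by linear_combination (1/2 : ℂ) * hentry k k
    rcases mul_eq_zero.mp h2 with h3 | h3
    · exact h3
    · exact absurd h3 hξkC
  funext i
  have h2 : a i * (ξ k : ℂ) = 0 := by
    linear_combination hentry i k - (ξ i : ℂ) * hak
  rcases mul_eq_zero.mp h2 with h3 | h3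
  · exact h3
  · exact absurd h3 hξkC

lemma projPerp_zero_imp (P : Matrix (Fin d) (Fin d) ℝ)
    (hPnot : ∀ a b : Fin d → ℝ, P ≠ symTensor a b)
    (a : Fin d → ℂ) (ξ : Fin d → ℝ)
    (h : projPerp P (symTensorC a ξ) = 0) : symTensorC a ξ = 0 := by
  set c : ℂ := (∑ i, ∑ j, symTensorC a ξ i j * ((P i j : ℝ) : ℂ)) /
      (((∑ i, ∑ j, (P i j) ^ 2 : ℝ) : ℂ)) with hc
  have hM : symTensorC a ξ = c • P.map (fun t => (t : ℂ)) := by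
    unfold projPerp at h
    exact sub_eq_zero.mp h
  by_cases h0 : c = 0
  · rw [hM, h0, zero_smul]
  exfalso
  have hentry : ∀ i j : Fin d, a i * (ξ j : ℂ) + (ξ i : ℂ) * a j = 2 * c * (P i j : ℂ) := by
    intro i j
    have h' : (a i * (ξ j : ℂ) + (ξ i : ℂ) * a j) / 2 = c * (P i j : ℂ) := by
      have h2 := congrFun (congrFun hM i) j
      simpa [Matrix.smul_apply, Matrix.map_apply, symTensorC] using h2
    linear_combination (2:ℂ) * h'
  have hre : ∀ i j : Fin d, (a i).re * ξ j + ξ i * (a j).re = 2 * c.re * P i j := by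
    intro i j
    have h2 := congrArg Complex.re (hentry i j)
    simp only [Complex.add_re, Complex.mul_re, Complex.ofReal_re, Complex.ofReal_im,
      Complex.re_ofNat, Complex.im_ofNat, Complex.mul_im] at h2
    linarith [h2]
  have him : ∀ i j : Fin d, (a i).im * ξ j + ξ i * (a j).im = 2 * c.im * P i j := by
    intro i j
    have h2 := congrArg Complex.im (hentry i j)
    simp only [Complex.add_im, Complex.mul_im, Complex.ofReal_re, Complex.ofReal_im,
      Complex.re_ofNat, Complex.im_ofNat, Complex.mul_re] at h2
    linarith [h2]
  have hcases : c.re ≠ 0 ∨ c.im ≠ 0 := by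
    by_contra hcon
    push_neg at hcon
    exact h0 (Complex.ext hcon.1 hcon.2)
  rcases hcases with hr | hi
  · apply hPnot (fun i => (a i).re / c.re) ξ
    ext i j
    simp only [symTensor]
    field_simp
    linear_combination -hre i j
  · apply hPnot (fun i => (a i).im / c.im) ξ
    ext i j
    simp only [symTensor]
    field_simp
    linear_combination -him i j

lemma cont_entry (i j : Fin d) :
    Continuous (fun p : (Fin d → ℂ) × (Fin d → ℝ) => symTensorC p.1 p.2 i j) := by
  have ha : ∀ k : Fin d, Continuous (fun p : (Fin d → ℂ) × (Fin d → ℝ) => p.1 k) :=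
    fun k => (continuous_apply k).comp continuous_fst
  have hξ : ∀ k : Fin d, Continuous (fun p : (Fin d → ℂ) × (Fin d → ℝ) => ((p.2 k : ℝ) : ℂ)) :=
    fun k => Complex.continuous_ofReal.comp ((continuous_apply k).comp continuous_snd)
  exact (((ha i).mul (hξ j)).add ((hξ i).mul (ha j))).div_const 2

lemma cont_G :
    Continuous (fun p : (Fin d → ℂ) × (Fin d → ℝ) => frobC (symTensorC p.1 p.2)) := by
  apply Real.continuous_sqrt.comp
  apply continuous_finset_sum; intro i _
  apply continuous_finset_sum; intro j _
  exact (continuous_norm.comp (cont_entry i j)).pow 2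

lemma cont_F (P : Matrix (Fin d) (Fin d) ℝ) :
    Continuous (fun p : (Fin d → ℂ) × (Fin d → ℝ) =>
      frobC (projPerp P (symTensorC p.1 p.2))) := by
  apply Real.continuous_sqrt.comp
  apply continuous_finset_sum; intro i _
  apply continuous_finset_sum; intro j _
  refine (continuous_norm.comp ?_).pow 2
  have hS : Continuous (fun p : (Fin d → ℂ) × (Fin d → ℝ) =>
      ∑ k, ∑ l, symTensorC p.1 p.2 k l * ((P k l : ℝ) : ℂ)) := by
    apply continuous_finset_sum; intro k _
    apply continuous_finset_sum; intro l _
    exact (cont_entry k l).mul continuous_const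
  show Continuous fun p : (Fin d → ℂ) × (Fin d → ℝ) => projPerp P (symTensorC p.1 p.2) i j
  unfold projPerp
  simp only [Matrix.sub_apply, Matrix.smul_apply, Matrix.map_apply, smul_eq_mul]
  exact (cont_entry i j).sub ((hS.div_const _).mul continuous_const)

lemma symTensorC_zero_left (ξ : Fin d → ℝ) : symTensorC (0 : Fin d → ℂ) ξ = 0 := by
  ext i j; simp [symTensorC]

lemma symTensorC_zero_right (a : Fin d → ℂ) : symTensorC a (0 : Fin d → ℝ) = 0 := by
  ext i j; simp [symTensorC]

lemma projPerp_zero (P : Matrix (Fin d) (Fin d) ℝ) : projPerp P (0 : Matrix (Fin d) (Fin d) ℂ) = 0 := by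
  unfold projPerp
  ext i j
  simp

end AuxEllipticity

/-- Ellipticity estimate: if the symmetric matrix `P` is not a symmetric tensor product
`a ⊙ b`, then there is `C > 0` with `‖a ⊙ ξ‖ ≤ C ‖𝐏(a ⊙ ξ)‖` for all `a ∈ ℂ^d`,
`ξ ∈ ℝ^d`, where `𝐏` is the orthogonal projection onto `(span_ℂ P)ᗮ`. -/
theorem ellipticity_estimate {d : ℕ} (P : Matrix (Fin d) (Fin d) ℝ) (hP : P.IsSymm)
    (hPnot : ∀ a b : Fin d → ℝ, P ≠ symTensor a b) :
    ∃ C > 0, ∀ (a : Fin d → ℂ) (ξ : Fin d → ℝ),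
      frobC (symTensorC a ξ) ≤ C * frobC (projPerp P (symTensorC a ξ)) := by
  rcases Nat.eq_zero_or_pos d with hd | hd
  · subst hd
    exact absurd (by ext i j; exact i.elim0) (hPnot 0 0)
  haveI : Nonempty (Fin d) := Fin.pos_iff_nonempty.mp hd
  -- the compact set K = sphere × sphere
  set K : Set ((Fin d → ℂ) × (Fin d → ℝ)) :=
    (Metric.sphere (0 : Fin d → ℂ) 1) ×ˢ (Metric.sphere (0 : Fin d → ℝ) 1) with hK
  have hKc : IsCompact K := (isCompact_sphere _ _).prod (isCompact_sphere _ _)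
  have hKne : K.Nonempty := by
    refine ⟨((fun _ => 1), (fun _ => 1)), Set.mem_prod.mpr ⟨?_, ?_⟩⟩
    · rw [mem_sphere_zero_iff_norm]
      simpa using (pi_norm_const (1 : ℂ))
    · rw [mem_sphere_zero_iff_norm]
      simpa using (pi_norm_const (1 : ℝ))
  -- positivity of the two functions on K
  have hpos : ∀ p ∈ K, symTensorC p.1 p.2 ≠ 0 := by
    rintro ⟨a, ξ⟩ hp habs
    rcases Set.mem_prod.mp hp with ⟨h1, h2⟩
    rw [mem_sphere_zero_iff_norm] at h1 h2
    rcases symTensorC_eq_zero habs with h | h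
    · rw [h] at h1; simp at h1
    · rw [h] at h2; simp at h2
  have hposF : ∀ p ∈ K, 0 < frobC (projPerp P (symTensorC p.1 p.2)) := by
    intro p hp
    refine lt_of_le_of_ne (frobC_nonneg _) (fun h => ?_)
    exact hpos p hp (projPerp_zero_imp P hPnot _ _ (frobC_eq_zero_iff.mp h.symm))
  obtain ⟨p₀, hp₀, hmin⟩ := hKc.exists_isMinOn hKne (cont_F P).continuousOn
  obtain ⟨p₁, hp₁, hmax⟩ := hKc.exists_isMaxOn hKne cont_G.continuousOn
  set m := frobC (projPerp P (symTensorC p₀.1 p₀.2)) with hm'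
  set B := frobC (symTensorC p₁.1 p₁.2) with hB'
  have hm : 0 < m := hposF p₀ hp₀
  have hB : 0 < B := by
    refine lt_of_le_of_ne (frobC_nonneg _) (fun h => ?_)
    exact hpos p₁ hp₁ (frobC_eq_zero_iff.mp h.symm)
  refine ⟨B / m, div_pos hB hm, ?_⟩
  have key : ∀ p ∈ K, frobC (symTensorC p.1 p.2)
      ≤ (B / m) * frobC (projPerp P (symTensorC p.1 p.2)) := by
    intro p hp
    calc frobC (symTensorC p.1 p.2) ≤ B := hmax hp
      _ = (B / m) * m := by field_simp
      _ ≤ (B / m) * frobC (projPerp P (symTensorC p.1 p.2)) :=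
          mul_le_mul_of_nonneg_left (hmin hp) (le_of_lt (div_pos hB hm))
  intro a ξ
  by_cases ha : a = 0
  · subst ha
    rw [symTensorC_zero_left, projPerp_zero]
    rw [frobC_eq_zero_iff.mpr rfl]
    simp
  by_cases hξ : ξ = 0
  · subst hξ
    rw [symTensorC_zero_right, projPerp_zero]
    rw [frobC_eq_zero_iff.mpr rfl]
    simp
  -- rescale to the sphere
  have hna : 0 < ‖a‖ := norm_pos_iff.mpr ha
  have hnξ : 0 < ‖ξ‖ := norm_pos_iff.mpr hξ
  set a' : Fin d → ℂ := ((‖a‖⁻¹ : ℝ) : ℂ) • a with ha'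
  set ξ' : Fin d → ℝ := ‖ξ‖⁻¹ • ξ with hξ'
  have hpK : (a', ξ') ∈ K := by
    refine Set.mem_prod.mpr ⟨?_, ?_⟩
    · rw [mem_sphere_zero_iff_norm, ha', norm_smul]
      simp [abs_of_pos hna, inv_mul_cancel₀ hna.ne']
    · rw [mem_sphere_zero_iff_norm, hξ', norm_smul]
      simp [abs_of_pos hnξ, inv_mul_cancel₀ hnξ.ne']
  set t : ℝ := ‖a‖⁻¹ * ‖ξ‖⁻¹ with ht'
  have ht : 0 < t := mul_pos (inv_pos.mpr hna) (inv_pos.mpr hnξ)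
  have hscale : symTensorC a' ξ' = ((t : ℝ) : ℂ) • symTensorC a ξ := by
    rw [ha', hξ', symTensorC_smul_left, symTensorC_smul_right, smul_smul, ht']
    norm_cast
  have hG : frobC (symTensorC a' ξ') = t * frobC (symTensorC a ξ) := by
    rw [hscale, frobC_smul, Complex.norm_real, Real.norm_eq_abs, abs_of_pos ht]
  have hF : frobC (projPerp P (symTensorC a' ξ')) = t * frobC (projPerp P (symTensorC a ξ)) := by
    rw [hscale, projPerp_smul, frobC_smul, Complex.norm_real, Real.norm_eq_abs, abs_of_pos ht]
  have hkey := key (a', ξ') hpK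
  rw [hG, hF] at hkey
  have h2 : t * frobC (symTensorC a ξ) ≤ t * ((B / m) * frobC (projPerp P (symTensorC a ξ))) := by
    calc t * frobC (symTensorC a ξ) ≤ B / m * (t * frobC (projPerp P (symTensorC a ξ))) := hkey
      _ = t * ((B / m) * frobC (projPerp P (symTensorC a ξ))) := by ring
  exact (mul_le_mul_iff_right₀ ht).mp h2
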